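/- Fix b, c > 0 and d = 0. Let (Ψ_n)_{n ≥ 3} satisfy Ψ_3 = 1 and c(n+3)Ψ_{n+1} + (b − c(n+1))Ψ_n − b((n−3)/(n−1))Ψ_{n−1} = 0 for n ≥ 3, and assume that (n² Ψ_n)_{n ≥ 3} converges to a finite limit Ψ_∞. Then Σ := Σ_{n ≥ 3} Ψ_n converges, for every n ≥ 3 the series Z_n := Σ_{k ≥ 3} Ψ_k/(n+k) converges, and the sequence Z − Σ e^{(2)} satisfies L'(Z − Σ e^{(2)}) = c Ψ_∞ (e^{(2)} − e^{(1)}), i.e., (L'(Z − Σe^{(2)}))_n = cΨ_∞(1/(n+2) − 1/(n+1)) for all n ≥ 3. -/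

import Mathlib

open Filter

/-- The one-dimensional operator L' acting on real sequences (for indices `n ≥ 3`). -/
noncomputable def Lop' (b c d : ℝ) (w : ℕ → ℝ) (n : ℕ) : ℝ :=
  -b * (((n : ℝ) + 3) / ((n : ℝ) + 1)) * w (n + 1)
    + (b + c * ((n : ℝ) - 1) + d) * w n
    - ((n : ℝ) - 3) * (c + d / ((n : ℝ) - 1)) * w (n - 1)

lemma abel_sum (b c : ℝ) (Ψ : ℕ → ℝ)
    (hrec : ∀ n : ℕ, 3 ≤ n →
      c * ((n : ℝ) + 3) * Ψ (n + 1) + (b - c * ((n : ℝ) + 1)) * Ψ n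
        - b * (((n : ℝ) - 3) / ((n : ℝ) - 1)) * Ψ (n - 1) = 0)
    (u : ℕ → ℝ) (N : ℕ) :
    ∑ k ∈ Finset.range N,
      (c*((k:ℝ)+5)*u (k+2) + (b - c*((k:ℝ)+4))*u (k+3)
        - b*(((k:ℝ)+1)/((k:ℝ)+3))*u (k+4)) * Ψ (k+3)
    = 5*c*u 2*Ψ 3 - c*((N:ℝ)+5)*u (N+2)*Ψ (N+3)
      - b*((N:ℝ)/((N:ℝ)+2))*u (N+3)*Ψ (N+2) := by
  induction N with
  | zero => norm_num; ring
  | succ N ih =>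
    have h : c*((N:ℝ)+6)*Ψ (N+4) + (b - c*((N:ℝ)+4))*Ψ (N+3)
        - b*((N:ℝ)/((N:ℝ)+2))*Ψ (N+2) = 0 := by
      have h0 := hrec (N+3) (by omega)
      have e1 : N+3+1 = N+4 := rfl
      have e2 : N+3-1 = N+2 := rfl
      rw [e1, e2] at h0
      push_cast at h0
      linear_combination h0
    rw [Finset.sum_range_succ, ih]
    have e3 : N+1+2 = N+3 := rfl
    have e4 : N+1+3 = N+4 := rfl
    rw [e3, e4]
    push_cast
    linear_combination (u (N+3)) * h

lemma final_algebra (b c n' zm z zp z0 s ψ : ℝ) (hn : 3 ≤ n')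
    (e1 : c*s + 2*b*z0 = 5*c)
    (e2 : (b-2*c)*s + 2*b*z0 = 10*c - c*ψ)
    (e3 : -(c*(n'-3))*zm + (b+c*(n'-1))*z - (b*(n'+3)/(n'+1))*zp + (2*b/(n'+1))*z0
      = 5*c/(n'+2)) :
    -b*((n'+3)/(n'+1))*(zp - s*(1/(n'+3))) + (b + c*(n'-1) + 0)*(z - s*(1/(n'+2)))
      - (n'-3)*(c + 0/(n'-1))*(zm - s*(1/(n'+1)))
    = c*ψ*(1/(n'+2) - 1/(n'+1)) := by
  have h1 : n' + 1 ≠ 0 := by nlinarith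
  have h2 : n' + 2 ≠ 0 := by nlinarith
  have h3 : n' + 3 ≠ 0 := by nlinarith
  have h4 : n' - 1 ≠ 0 := by nlinarith
  linear_combination (norm := skip) e3 + (-1/(n'+1) - 1/((n'+1)*(n'+2)))*e1
    + (1/((n'+1)*(n'+2)))*e2
  field_simp
  ring

theorem stmt_11 (b c : ℝ) (hb : 0 < b) (hc : 0 < c)
    (Ψ : ℕ → ℝ) (hΨ3 : Ψ 3 = 1)
    (hrec : ∀ n : ℕ, 3 ≤ n →
      c * ((n : ℝ) + 3) * Ψ (n + 1) + (b - c * ((n : ℝ) + 1)) * Ψ n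
        - b * (((n : ℝ) - 3) / ((n : ℝ) - 1)) * Ψ (n - 1) = 0)
    (Ψinf : ℝ)
    (hlim : Filter.Tendsto (fun n : ℕ => (n : ℝ) ^ 2 * Ψ n) Filter.atTop (nhds Ψinf)) :
    Summable (fun k : ℕ => Ψ (k + 3)) ∧
    (∀ n : ℕ, 3 ≤ n → Summable (fun k : ℕ => Ψ (k + 3) / ((n : ℝ) + (k : ℝ) + 3))) ∧
    ∀ n : ℕ, 3 ≤ n →
      Lop' b c 0
        (fun m : ℕ => (∑' k : ℕ, Ψ (k + 3) / ((m : ℝ) + (k : ℝ) + 3))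
          - (∑' k : ℕ, Ψ (k + 3)) * (1 / ((m : ℝ) + 2))) n
        = c * Ψinf * (1 / ((n : ℝ) + 2) - 1 / ((n : ℝ) + 1)) := by
  ----------------------------------------------------------------
  -- summability
  ----------------------------------------------------------------
  obtain ⟨C, hC⟩ : ∃ C : ℝ, ∀ k : ℕ, |(k:ℝ)^2 * Ψ k| ≤ C := by
    obtain ⟨C, hC⟩ := hlim.abs.bddAbove_range
    exact ⟨C, fun k => hC ⟨k, rfl⟩⟩
  have hbound : ∀ k : ℕ, |Ψ (k+3)| ≤ C * (1/((k:ℝ)+3)^2) := by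
    intro k
    have hp : (0:ℝ) < ((k:ℝ)+3)^2 := by positivity
    have h := hC (k+3)
    push_cast at h
    rw [abs_mul, abs_of_nonneg (le_of_lt hp)] at h
    rw [mul_one_div, le_div_iff₀ hp]
    linarith [h]
  have hbase : Summable (fun k : ℕ => C * (1/((k:ℝ)+3)^2)) := by
    have h2 : Summable (fun n : ℕ => 1/(n:ℝ)^2) := by
      have := Real.summable_one_div_nat_pow.mpr (le_refl 2)
      simpa using this
    have h3 := (summable_nat_add_iff 3).mpr h2
    exact (h3.congr (fun n => by push_cast; ring)).mul_left C
  have key : ∀ v : ℕ → ℝ, (∀ k, |v k| ≤ 1) → Summable (fun k => v k * Ψ (k+3)) := by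
    intro v hv
    refine Summable.of_norm_bounded hbase (fun k => ?_)
    have h1 := hbound k
    rw [show ‖v k * Ψ (k+3)‖ = |v k| * |Ψ (k+3)| from abs_mul _ _]
    calc |v k| * |Ψ (k+3)| ≤ 1 * |Ψ (k+3)| :=
          mul_le_mul_of_nonneg_right (hv k) (abs_nonneg _)
      _ = |Ψ (k+3)| := one_mul _
      _ ≤ C * (1/((k:ℝ)+3)^2) := h1
  have hΦ : Summable (fun k : ℕ => Ψ (k+3)) := by
    have := key (fun _ => 1) (fun k => by norm_num)
    exact this.congr (fun k => by ring)
  have hZ : ∀ r : ℝ, 0 ≤ r → Summable (fun k : ℕ => Ψ (k+3) / ((k:ℝ)+3+r)) := by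
    intro r hr
    have hv : ∀ k : ℕ, |1/((k:ℝ)+3+r)| ≤ 1 := by
      intro k
      rw [abs_of_pos (by positivity), div_le_one (by positivity)]
      have : (0:ℝ) ≤ (k:ℝ) := k.cast_nonneg
      linarith
    exact (key _ hv).congr (fun k => by ring)
  ----------------------------------------------------------------
  -- boundary limits
  ----------------------------------------------------------------
  have hq : Tendsto (fun N : ℕ => ((N:ℝ)+3)^2 * Ψ (N+3)) atTop (nhds Ψinf) := by
    have h := hlim.comp (tendsto_add_atTop_nat 3)
    exact h.congr (fun N => by simp only [Function.comp_apply]; push_cast; ring)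
  have hq2 : Tendsto (fun N : ℕ => ((N:ℝ)+2)^2 * Ψ (N+2)) atTop (nhds Ψinf) := by
    have h := hlim.comp (tendsto_add_atTop_nat 2)
    exact h.congr (fun N => by simp only [Function.comp_apply]; push_cast; ring)
  have hNat : Tendsto (fun N : ℕ => (N:ℝ)) atTop atTop := tendsto_natCast_atTop_atTop
  have hi3 : Tendsto (fun N : ℕ => ((N:ℝ)+3)⁻¹) atTop (nhds 0) :=
    (tendsto_atTop_add_const_right _ 3 hNat).inv_tendsto_atTop
  have hi2 : Tendsto (fun N : ℕ => ((N:ℝ)+2)⁻¹) atTop (nhds 0) :=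
    (tendsto_atTop_add_const_right _ 2 hNat).inv_tendsto_atTop
  have hne3 : ∀ N : ℕ, ((N:ℝ)+3) ≠ 0 := fun N => by positivity
  have hne2 : ∀ N : ℕ, ((N:ℝ)+2) ≠ 0 := fun N => by positivity
  have fac1 : ∀ N : ℕ, ((N:ℝ)+3)^2*(((N:ℝ)+3)⁻¹ + 2*(((N:ℝ)+3)⁻¹*((N:ℝ)+3)⁻¹)) = (N:ℝ)+5 :=
    fun N => by field_simp [hne3 N]; ring
  have fac2 : ∀ N : ℕ, ((N:ℝ)+2)^2*(((N:ℝ)+2)⁻¹*((N:ℝ)+2)⁻¹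
      - 2*(((N:ℝ)+2)⁻¹*((N:ℝ)+2)⁻¹*((N:ℝ)+2)⁻¹)) = (N:ℝ)/((N:ℝ)+2) :=
    fun N => by field_simp [hne2 N]; ring
  have fac3 : ∀ N : ℕ, ((N:ℝ)+3)^2*((1:ℝ) + ((N:ℝ)+3)⁻¹ - 2*(((N:ℝ)+3)⁻¹*((N:ℝ)+3)⁻¹))
      = ((N:ℝ)+5)*((N:ℝ)+2) :=
    fun N => by field_simp [hne3 N]; ring
  have fac4 : ∀ N : ℕ, ((N:ℝ)+2)^2*(((N:ℝ)+2)⁻¹ - ((N:ℝ)+2)⁻¹*((N:ℝ)+2)⁻¹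
      - 2*(((N:ℝ)+2)⁻¹*((N:ℝ)+2)⁻¹*((N:ℝ)+2)⁻¹)) = (N:ℝ)*((N:ℝ)+3)/((N:ℝ)+2) :=
    fun N => by field_simp [hne2 N]; ring
  have hA1 : Tendsto (fun N : ℕ => c*((N:ℝ)+5)*Ψ (N+3)) atTop (nhds 0) := by
    have h := ((hq.mul (hi3.add ((hi3.mul hi3).const_mul 2))).const_mul c)
    rw [show c * (Ψinf * (0 + 2*(0*0))) = (0:ℝ) from by ring] at h
    exact h.congr (fun N => by linear_combination (c * Ψ (N+3)) * fac1 N)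
  have hA2 : Tendsto (fun N : ℕ => b*((N:ℝ)/((N:ℝ)+2))*Ψ (N+2)) atTop (nhds 0) := by
    have h := ((hq2.mul ((hi2.mul hi2).sub (((hi2.mul hi2).mul hi2).const_mul 2))).const_mul b)
    rw [show b * (Ψinf * (0*0 - 2*(0*0*0))) = (0:ℝ) from by ring] at h
    exact h.congr (fun N => by linear_combination (b * Ψ (N+2)) * fac2 N)
  have hB1 : Tendsto (fun N : ℕ => c*((N:ℝ)+5)*((N:ℝ)+2)*Ψ (N+3)) atTop (nhds (c*Ψinf)) := by
    have hone : Tendsto (fun _ : ℕ => (1:ℝ)) atTop (nhds 1) := tendsto_const_nhds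
    have h := ((hq.mul ((hone.add hi3).sub ((hi3.mul hi3).const_mul 2))).const_mul c)
    rw [show c * (Ψinf * (1 + 0 - 2*(0*0))) = c*Ψinf from by ring] at h
    exact h.congr (fun N => by linear_combination (c * Ψ (N+3)) * fac3 N)
  have hB2 : Tendsto (fun N : ℕ => b*((N:ℝ)/((N:ℝ)+2))*((N:ℝ)+3)*Ψ (N+2)) atTop (nhds 0) := by
    have h := ((hq2.mul ((hi2.sub (hi2.mul hi2)).sub
      (((hi2.mul hi2).mul hi2).const_mul 2))).const_mul b)
    rw [show b * (Ψinf * (0 - 0*0 - 2*(0*0*0))) = (0:ℝ) from by ring] at h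
    exact h.congr (fun N => by linear_combination (b * Ψ (N+2)) * fac4 N)
  ----------------------------------------------------------------
  -- E1 : c*S + 2*b*Z0 = 5*c
  ----------------------------------------------------------------
  have habel1 := abel_sum b c Ψ hrec (fun _ => (1:ℝ))
  have hlim1 : Tendsto (fun N : ℕ => 5*c*(1:ℝ)*Ψ 3 - c*((N:ℝ)+5)*(1:ℝ)*Ψ (N+3)
      - b*((N:ℝ)/((N:ℝ)+2))*(1:ℝ)*Ψ (N+2)) atTop (nhds (5*c)) := by
    have hA1' : Tendsto (fun N : ℕ => c*((N:ℝ)+5)*(1:ℝ)*Ψ (N+3)) atTop (nhds 0) :=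
      hA1.congr (fun N => by ring)
    have hA2' : Tendsto (fun N : ℕ => b*((N:ℝ)/((N:ℝ)+2))*(1:ℝ)*Ψ (N+2)) atTop (nhds 0) :=
      hA2.congr (fun N => by ring)
    have hcst : Tendsto (fun _ : ℕ => 5*c*(1:ℝ)*Ψ 3) atTop (nhds (5*c*(1:ℝ)*Ψ 3)) :=
      tendsto_const_nhds
    have h := (hcst.sub hA1').sub hA2'
    rw [show 5*c*(1:ℝ)*Ψ 3 - 0 - 0 = 5*c from by rw [hΨ3]; ring] at h
    exact h
  have htend1 := hlim1.congr (fun N => (habel1 N).symm)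
  have hp1 : HasSum (fun k : ℕ => c*Ψ (k+3) + 2*b*(Ψ (k+3)/((k:ℝ)+3+0)))
      (c*(∑' k : ℕ, Ψ (k+3)) + 2*b*(∑' k : ℕ, Ψ (k+3)/((k:ℝ)+3+0))) :=
    (hΦ.hasSum.mul_left c).add (((hZ 0 le_rfl).hasSum).mul_left (2*b))
  have heq1 : ∀ N : ℕ, ∑ k ∈ Finset.range N, (c*Ψ (k+3) + 2*b*(Ψ (k+3)/((k:ℝ)+3+0)))
      = ∑ k ∈ Finset.range N, (c*((k:ℝ)+5)*(1:ℝ) + (b - c*((k:ℝ)+4))*(1:ℝ)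
        - b*(((k:ℝ)+1)/((k:ℝ)+3))*(1:ℝ)) * Ψ (k+3) := by
    refine fun N => Finset.sum_congr rfl (fun k _ => ?_)
    have h3 : ((k:ℝ)+3) ≠ 0 := hne3 k
    field_simp
    ring
  have E1 : c*(∑' k : ℕ, Ψ (k+3)) + 2*b*(∑' k : ℕ, Ψ (k+3)/((k:ℝ)+3+0)) = 5*c :=
    tendsto_nhds_unique (hp1.tendsto_sum_nat.congr heq1) htend1
  ----------------------------------------------------------------
  -- E2 : (b-2c)*S + 2*b*Z0 = 10*c - c*Ψinf
  ----------------------------------------------------------------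
  have habel2 := abel_sum b c Ψ hrec (fun j => (j:ℝ))
  have hlim2 : Tendsto (fun N : ℕ => 5*c*((2:ℕ):ℝ)*Ψ 3 - c*((N:ℝ)+5)*(((N+2:ℕ)):ℝ)*Ψ (N+3)
      - b*((N:ℝ)/((N:ℝ)+2))*(((N+3:ℕ)):ℝ)*Ψ (N+2)) atTop (nhds (10*c - c*Ψinf)) := by
    have hB1' : Tendsto (fun N : ℕ => c*((N:ℝ)+5)*(((N+2:ℕ)):ℝ)*Ψ (N+3)) atTop (nhds (c*Ψinf)) :=
      hB1.congr (fun N => by push_cast; ring)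
    have hB2' : Tendsto (fun N : ℕ => b*((N:ℝ)/((N:ℝ)+2))*(((N+3:ℕ)):ℝ)*Ψ (N+2)) atTop (nhds 0) :=
      hB2.congr (fun N => by push_cast; ring)
    have hcst : Tendsto (fun _ : ℕ => 5*c*((2:ℕ):ℝ)*Ψ 3) atTop (nhds (5*c*((2:ℕ):ℝ)*Ψ 3)) :=
      tendsto_const_nhds
    have h := (hcst.sub hB1').sub hB2'
    rw [show 5*c*((2:ℕ):ℝ)*Ψ 3 - c*Ψinf - 0 = 10*c - c*Ψinf from by rw [hΨ3]; push_cast; ring] at h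
    exact h
  have htend2 := hlim2.congr (fun N => (habel2 N).symm)
  have hp2 : HasSum (fun k : ℕ => (b-2*c)*Ψ (k+3) + 2*b*(Ψ (k+3)/((k:ℝ)+3+0)))
      ((b-2*c)*(∑' k : ℕ, Ψ (k+3)) + 2*b*(∑' k : ℕ, Ψ (k+3)/((k:ℝ)+3+0))) :=
    (hΦ.hasSum.mul_left (b-2*c)).add (((hZ 0 le_rfl).hasSum).mul_left (2*b))
  have heq2 : ∀ N : ℕ, ∑ k ∈ Finset.range N, ((b-2*c)*Ψ (k+3) + 2*b*(Ψ (k+3)/((k:ℝ)+3+0)))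
      = ∑ k ∈ Finset.range N, (c*((k:ℝ)+5)*(((k+2:ℕ)):ℝ) + (b - c*((k:ℝ)+4))*(((k+3:ℕ)):ℝ)
        - b*(((k:ℝ)+1)/((k:ℝ)+3))*(((k+4:ℕ)):ℝ)) * Ψ (k+3) := by
    refine fun N => Finset.sum_congr rfl (fun k _ => ?_)
    have h3 : ((k:ℝ)+3) ≠ 0 := hne3 k
    push_cast
    field_simp
    ring
  have E2 : (b-2*c)*(∑' k : ℕ, Ψ (k+3)) + 2*b*(∑' k : ℕ, Ψ (k+3)/((k:ℝ)+3+0))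
      = 10*c - c*Ψinf :=
    tendsto_nhds_unique (hp2.tendsto_sum_nat.congr heq2) htend2
  ----------------------------------------------------------------
  -- conclusion
  ----------------------------------------------------------------
  refine ⟨hΦ, fun n _ => ?_, fun n hn => ?_⟩
  · have hv : ∀ k : ℕ, |1/((n:ℝ)+(k:ℝ)+3)| ≤ 1 := by
      intro k
      rw [abs_of_pos (by positivity), div_le_one (by positivity)]
      have h1 : (0:ℝ) ≤ (k:ℝ) := k.cast_nonneg
      have h2 : (0:ℝ) ≤ (n:ℝ) := n.cast_nonneg
      linarith
    exact (key _ hv).congr (fun k => by ring)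
  -- E3 for this n
  · have hn3 : (3:ℝ) ≤ (n:ℝ) := by exact_mod_cast hn
    have hnn : (0:ℝ) ≤ (n:ℝ) := n.cast_nonneg
    have habel3 := abel_sum b c Ψ hrec (fun j => 1/((j:ℝ)+(n:ℝ)))
    have hirn2 : Tendsto (fun N : ℕ => ((((N+2:ℕ)):ℝ)+(n:ℝ))⁻¹) atTop (nhds 0) := by
      have h := (tendsto_atTop_add_const_right _ (2+(n:ℝ)) hNat).inv_tendsto_atTop
      exact h.congr (fun N => by simp only [Pi.inv_apply]; push_cast; ring_nf)
    have hirn3 : Tendsto (fun N : ℕ => ((((N+3:ℕ)):ℝ)+(n:ℝ))⁻¹) atTop (nhds 0) := by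
      have h := (tendsto_atTop_add_const_right _ (3+(n:ℝ)) hNat).inv_tendsto_atTop
      exact h.congr (fun N => by simp only [Pi.inv_apply]; push_cast; ring_nf)
    have hC1 : Tendsto (fun N : ℕ => c*((N:ℝ)+5)*(1/((((N+2:ℕ)):ℝ)+(n:ℝ)))*Ψ (N+3))
        atTop (nhds 0) := by
      have h := hA1.mul hirn2
      rw [show (0:ℝ)*0 = 0 from by ring] at h
      exact h.congr (fun N => by ring)
    have hC2 : Tendsto (fun N : ℕ => b*((N:ℝ)/((N:ℝ)+2))*(1/((((N+3:ℕ)):ℝ)+(n:ℝ)))*Ψ (N+2))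
        atTop (nhds 0) := by
      have h := hA2.mul hirn3
      rw [show (0:ℝ)*0 = 0 from by ring] at h
      exact h.congr (fun N => by ring)
    have hlim3 : Tendsto (fun N : ℕ => 5*c*(1/(((2:ℕ):ℝ)+(n:ℝ)))*Ψ 3
        - c*((N:ℝ)+5)*(1/((((N+2:ℕ)):ℝ)+(n:ℝ)))*Ψ (N+3)
        - b*((N:ℝ)/((N:ℝ)+2))*(1/((((N+3:ℕ)):ℝ)+(n:ℝ)))*Ψ (N+2))
        atTop (nhds (5*c/((n:ℝ)+2))) := by
      have hcst : Tendsto (fun _ : ℕ => 5*c*(1/(((2:ℕ):ℝ)+(n:ℝ)))*Ψ 3)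
          atTop (nhds (5*c*(1/(((2:ℕ):ℝ)+(n:ℝ)))*Ψ 3)) := tendsto_const_nhds
      have h := (hcst.sub hC1).sub hC2
      rw [show 5*c*(1/(((2:ℕ):ℝ)+(n:ℝ)))*Ψ 3 - 0 - 0 = 5*c/((n:ℝ)+2) from by
        rw [hΨ3]; push_cast; ring] at h
      exact h
    have htend3 := hlim3.congr (fun N => (habel3 N).symm)
    have hZm := hZ ((n:ℝ)-1) (by linarith)
    have hZz := hZ ((n:ℝ)) hnn
    have hZp := hZ ((n:ℝ)+1) (by linarith)
    have hZ0 := hZ 0 le_rfl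
    have hp3 : HasSum (fun k : ℕ =>
        -(c*((n:ℝ)-3))*(Ψ (k+3)/((k:ℝ)+3+((n:ℝ)-1)))
        + ((b+c*((n:ℝ)-1))*(Ψ (k+3)/((k:ℝ)+3+(n:ℝ)))
          + (-(b*((n:ℝ)+3)/((n:ℝ)+1))*(Ψ (k+3)/((k:ℝ)+3+((n:ℝ)+1)))
            + (2*b/((n:ℝ)+1))*(Ψ (k+3)/((k:ℝ)+3+0)))))
        (-(c*((n:ℝ)-3))*(∑' k : ℕ, Ψ (k+3)/((k:ℝ)+3+((n:ℝ)-1)))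
        + ((b+c*((n:ℝ)-1))*(∑' k : ℕ, Ψ (k+3)/((k:ℝ)+3+(n:ℝ)))
          + (-(b*((n:ℝ)+3)/((n:ℝ)+1))*(∑' k : ℕ, Ψ (k+3)/((k:ℝ)+3+((n:ℝ)+1)))
            + (2*b/((n:ℝ)+1))*(∑' k : ℕ, Ψ (k+3)/((k:ℝ)+3+0))))) :=
      (hZm.hasSum.mul_left _).add ((hZz.hasSum.mul_left _).add
        ((hZp.hasSum.mul_left _).add (hZ0.hasSum.mul_left _)))
    have heq3 : ∀ N : ℕ, ∑ k ∈ Finset.range N, (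
        -(c*((n:ℝ)-3))*(Ψ (k+3)/((k:ℝ)+3+((n:ℝ)-1)))
        + ((b+c*((n:ℝ)-1))*(Ψ (k+3)/((k:ℝ)+3+(n:ℝ)))
          + (-(b*((n:ℝ)+3)/((n:ℝ)+1))*(Ψ (k+3)/((k:ℝ)+3+((n:ℝ)+1)))
            + (2*b/((n:ℝ)+1))*(Ψ (k+3)/((k:ℝ)+3+0)))))
        = ∑ k ∈ Finset.range N, (c*((k:ℝ)+5)*(1/((((k+2:ℕ)):ℝ)+(n:ℝ)))
            + (b - c*((k:ℝ)+4))*(1/((((k+3:ℕ)):ℝ)+(n:ℝ)))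
            - b*(((k:ℝ)+1)/((k:ℝ)+3))*(1/((((k+4:ℕ)):ℝ)+(n:ℝ)))) * Ψ (k+3) := by
      refine fun N => Finset.sum_congr rfl (fun k _ => ?_)
      have d1 : ((k:ℝ)+3) ≠ 0 := hne3 k
      have d2 : ((k:ℝ)+2+(n:ℝ)) ≠ 0 := by positivity
      have d3 : ((k:ℝ)+3+(n:ℝ)) ≠ 0 := by positivity
      have d4 : ((k:ℝ)+4+(n:ℝ)) ≠ 0 := by positivity
      have d5 : ((n:ℝ)+1) ≠ 0 := by positivity
      push_cast
      rw [show (k:ℝ)+3+((n:ℝ)-1) = (k:ℝ)+2+(n:ℝ) from by ring,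
        show (k:ℝ)+3+((n:ℝ)+1) = (k:ℝ)+4+(n:ℝ) from by ring,
        show (k:ℝ)+3+(0:ℝ) = (k:ℝ)+3 from by ring]
      field_simp
      ring
    have E3 : -(c*((n:ℝ)-3))*(∑' k : ℕ, Ψ (k+3)/((k:ℝ)+3+((n:ℝ)-1)))
        + (b+c*((n:ℝ)-1))*(∑' k : ℕ, Ψ (k+3)/((k:ℝ)+3+(n:ℝ)))
        - (b*((n:ℝ)+3)/((n:ℝ)+1))*(∑' k : ℕ, Ψ (k+3)/((k:ℝ)+3+((n:ℝ)+1)))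
        + (2*b/((n:ℝ)+1))*(∑' k : ℕ, Ψ (k+3)/((k:ℝ)+3+0)) = 5*c/((n:ℝ)+2) := by
      have h := tendsto_nhds_unique (hp3.tendsto_sum_nat.congr heq3) htend3
      linear_combination h
    -- rewrite the goal tsums
    have hg1 : (∑' k : ℕ, Ψ (k+3) / ((((n+1:ℕ)):ℝ) + (k:ℝ) + 3))
        = ∑' k : ℕ, Ψ (k+3)/((k:ℝ)+3+((n:ℝ)+1)) :=
      tsum_congr (fun k => by push_cast; ring_nf)
    have hg2 : (∑' k : ℕ, Ψ (k+3) / ((n:ℝ) + (k:ℝ) + 3))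
        = ∑' k : ℕ, Ψ (k+3)/((k:ℝ)+3+(n:ℝ)) :=
      tsum_congr (fun k => by ring_nf)
    have hg3 : (∑' k : ℕ, Ψ (k+3) / ((((n-1:ℕ)):ℝ) + (k:ℝ) + 3))
        = ∑' k : ℕ, Ψ (k+3)/((k:ℝ)+3+((n:ℝ)-1)) :=
      tsum_congr (fun k => by
        rw [Nat.cast_sub (by omega : 1 ≤ n)]
        push_cast
        ring_nf)
    have FA := final_algebra b c ((n:ℝ))
      (∑' k : ℕ, Ψ (k+3)/((k:ℝ)+3+((n:ℝ)-1)))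
      (∑' k : ℕ, Ψ (k+3)/((k:ℝ)+3+(n:ℝ)))
      (∑' k : ℕ, Ψ (k+3)/((k:ℝ)+3+((n:ℝ)+1)))
      (∑' k : ℕ, Ψ (k+3)/((k:ℝ)+3+0))
      (∑' k : ℕ, Ψ (k+3)) Ψinf hn3 E1 E2 E3
    simp only [Lop']
    rw [hg1, hg2, hg3]
    push_cast [Nat.cast_sub (by omega : 1 ≤ n)]
    linear_combination FA
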